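/- Let G be a finite group acting on k[V], let 𝒳 be a family of subgroups of G and K a subgroup with K ≤ H for all H ∈ 𝒳. Suppose there exists f ∈ k[V]^G with f ∈ I^H_K for every H ∈ 𝒳 but f ∉ I^G_K. Then the transfer ideal I^G_𝒳 annihilates the nonzero element f + I^G_K of k[V]^G / I^G_K; in particular I^G_𝒳 is contained in some associated prime of k[V]^G / I^G_K. -/

import Mathlib

set_option synthInstance.maxHeartbeats 1000000
open MvPolynomial

/-- The ring of `H`-invariants in `R`. -/
def invSub (G R : Type) [Group G] [CommRing R] [MulSemiringAction G R]
    (H : Subgroup G) : Subring R where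
  carrier := {f : R | ∀ h : H, (h : G) • f = f}
  mul_mem' := fun ha hb h => by rw [smul_mul', ha h, hb h]
  one_mem' := fun h => smul_one _
  add_mem' := fun ha hb h => by rw [smul_add, ha h, hb h]
  zero_mem' := fun h => smul_zero _
  neg_mem' := fun ha h => by rw [smul_neg, (ha h : _)]

/-- The relative transfer `Tr^H_K`, summing over representatives of `H/K`. -/
noncomputable def relTransfer (G R : Type) [Group G] [Finite G] [CommRing R]
    [MulSemiringAction G R] (H K : Subgroup G) (f : R) : R :=
  haveI : Fintype (H ⧸ K.subgroupOf H) := Fintype.ofFinite _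
  ∑ c : H ⧸ K.subgroupOf H, ((Quotient.out c : H) : G) • f

/-- The transfer ideal `I^H_K = Tr^H_K(k[V]^K)·k[V]^H` of `k[V]^H`. -/
noncomputable def transferIdeal (G R : Type) [Group G] [Finite G] [CommRing R]
    [MulSemiringAction G R] (H K : Subgroup G) : Ideal (invSub G R H) :=
  Ideal.span {y | ∃ f : R, (∀ x : K, (x : G) • f = f) ∧ (y : R) = relTransfer G R H K f}

/-- The transfer ideal `I^G_𝒳 = Σ_{H ∈ 𝒳} Tr^G_H(k[V]^H)` of `k[V]^G`. -/
noncomputable def transferIdealFamily (G R : Type) [Group G] [Finite G] [CommRing R]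
    [MulSemiringAction G R] (𝓧 : Set (Subgroup G)) : Ideal (invSub G R ⊤) :=
  Ideal.span {y | ∃ H ∈ 𝓧, ∃ f : R, (∀ x : H, (x : G) • f = f) ∧
    (y : R) = relTransfer G R ⊤ H f}


section Helpers

set_option linter.unusedSectionVars false
set_option maxHeartbeats 1000000

variable {G R : Type} [Group G] [Finite G] [CommRing R] [MulSemiringAction G R]

theorem relTransfer_def (H K : Subgroup G) [inst : Fintype (H ⧸ K.subgroupOf H)] (w : R) :
    relTransfer G R H K w = ∑ c : H ⧸ K.subgroupOf H, ((c.out : H) : G) • w := by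
  unfold relTransfer
  congr!

theorem smul_out_eq {K H : Subgroup G} {w : R} (hw : ∀ x : K, (x : G) • w = w) (a : H) :
    (((QuotientGroup.mk a : H ⧸ K.subgroupOf H).out : H) : G) • w = (a : G) • w := by
  set b : H := (QuotientGroup.mk a : H ⧸ K.subgroupOf H).out with hb
  have hmem : b⁻¹ * a ∈ K.subgroupOf H := QuotientGroup.eq.mp (QuotientGroup.out_eq' _)
  have h1 : ((b⁻¹ * a : H) : G) • w = w := hw ⟨((b⁻¹ * a : H) : G), hmem⟩
  have h2 : (a : G) = (b : G) * ((b⁻¹ * a : H) : G) := by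
    push_cast
    group
  rw [h2, mul_smul, h1]

theorem relTransfer_smul {H K : Subgroup G} {w : R} (hw : ∀ x : K, (x : G) • w = w) (h : H) :
    (h : G) • relTransfer G R H K w = relTransfer G R H K w := by
  haveI : Fintype (H ⧸ K.subgroupOf H) := Fintype.ofFinite _
  rw [relTransfer_def, Finset.smul_sum]
  refine Fintype.sum_bijective (h • ·) (MulAction.bijective h) _ _ (fun c => ?_)
  have e1 : (h • c : H ⧸ K.subgroupOf H) = QuotientGroup.mk (h * c.out) :=
    (MulAction.Quotient.mk_smul_out (K.subgroupOf H) h c).symm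
  beta_reduce
  rw [e1, smul_out_eq hw (h * c.out), Subgroup.coe_mul, mul_smul]

theorem relTransfer_zero (H K : Subgroup G) : relTransfer G R H K (0 : R) = 0 := by
  haveI : Fintype (H ⧸ K.subgroupOf H) := Fintype.ofFinite _
  rw [relTransfer_def]
  simp

theorem relTransfer_add (H K : Subgroup G) (u v : R) :
    relTransfer G R H K (u + v) = relTransfer G R H K u + relTransfer G R H K v := by
  haveI : Fintype (H ⧸ K.subgroupOf H) := Fintype.ofFinite _
  rw [relTransfer_def, relTransfer_def, relTransfer_def]
  simp [smul_add, Finset.sum_add_distrib]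

theorem relTransfer_mul_right {H K : Subgroup G} {v : R} (hv : ∀ h : H, (h : G) • v = v)
    (w : R) : relTransfer G R H K w * v = relTransfer G R H K (w * v) := by
  haveI : Fintype (H ⧸ K.subgroupOf H) := Fintype.ofFinite _
  rw [relTransfer_def, relTransfer_def, Finset.sum_mul]
  refine Finset.sum_congr rfl fun c _ => ?_
  rw [smul_mul', hv c.out]

/-- The natural map `(G/H) × (H/K) → G/K`, with `G` realised as `⊤`. -/
noncomputable def theta (K H : Subgroup G) :
    ((⊤ : Subgroup G) ⧸ H.subgroupOf ⊤) × (H ⧸ K.subgroupOf H) →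
      ((⊤ : Subgroup G) ⧸ K.subgroupOf ⊤) :=
  fun p => QuotientGroup.mk (p.1.out * ⟨(p.2.out : G), Subgroup.mem_top _⟩)

theorem theta_bijective {K H : Subgroup G} (hKH : K ≤ H) :
    Function.Bijective (theta (G := G) K H) := by
  constructor
  · rintro ⟨c₁, d₁⟩ ⟨c₂, d₂⟩ h
    have hk := QuotientGroup.eq.mp h
    have hkG : ((c₁.out : G) * (d₁.out : G))⁻¹ * ((c₂.out : G) * (d₂.out : G)) ∈ K := by
      have := Subgroup.mem_subgroupOf.mp hk
      push_cast at this
      convert this using 1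
    have hH : (c₁.out : G)⁻¹ * (c₂.out : G) ∈ H := by
      have hx : ((c₁.out : G) * (d₁.out : G))⁻¹ * ((c₂.out : G) * (d₂.out : G)) ∈ H := hKH hkG
      have e : (c₁.out : G)⁻¹ * (c₂.out : G) =
          (d₁.out : G) * (((c₁.out : G) * (d₁.out : G))⁻¹ *
            ((c₂.out : G) * (d₂.out : G))) * (d₂.out : G)⁻¹ := by group
      rw [e]
      exact H.mul_mem (H.mul_mem (d₁.out).2 hx) (H.inv_mem (d₂.out).2)
    have hc : c₁ = c₂ := by
      rw [← QuotientGroup.out_eq' c₁, ← QuotientGroup.out_eq' c₂]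
      refine QuotientGroup.eq.mpr (Subgroup.mem_subgroupOf.mpr ?_)
      push_cast
      exact hH
    subst hc
    have hdK : (d₁.out : G)⁻¹ * (d₂.out : G) ∈ K := by
      have e : (d₁.out : G)⁻¹ * (d₂.out : G) =
          ((c₁.out : G) * (d₁.out : G))⁻¹ * ((c₁.out : G) * (d₂.out : G)) := by group
      rw [e]
      exact hkG
    have hd : d₁ = d₂ := by
      rw [← QuotientGroup.out_eq' d₁, ← QuotientGroup.out_eq' d₂]
      refine QuotientGroup.eq.mpr (Subgroup.mem_subgroupOf.mpr ?_)
      push_cast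
      exact hdK
    rw [hd]
  · intro e
    set c : (⊤ : Subgroup G) ⧸ H.subgroupOf ⊤ := QuotientGroup.mk e.out with hc
    have hh : c.out⁻¹ * e.out ∈ H.subgroupOf ⊤ := QuotientGroup.eq.mp (QuotientGroup.out_eq' _)
    set d0 : H := ⟨((c.out⁻¹ * e.out : (⊤ : Subgroup G)) : G), Subgroup.mem_subgroupOf.mp hh⟩
      with hd0
    refine ⟨⟨c, QuotientGroup.mk d0⟩, ?_⟩
    show QuotientGroup.mk (c.out * ⟨(((QuotientGroup.mk d0 : H ⧸ K.subgroupOf H).out : H) : G),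
      Subgroup.mem_top _⟩) = e
    rw [← QuotientGroup.out_eq' e]
    refine QuotientGroup.eq.mpr (Subgroup.mem_subgroupOf.mpr ?_)
    have hd : ((QuotientGroup.mk d0 : H ⧸ K.subgroupOf H).out)⁻¹ * d0 ∈ K.subgroupOf H :=
      QuotientGroup.eq.mp (QuotientGroup.out_eq' _)
    have hdG := Subgroup.mem_subgroupOf.mp hd
    push_cast at hdG ⊢
    convert hdG using 1
    group
    simp only [hd0, Subgroup.coe_mk, Subgroup.coe_mul, Subgroup.coe_inv]
    group

theorem relTransfer_trans {K H : Subgroup G} (hKH : K ≤ H) {u v : R}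
    (hu : ∀ x : K, (x : G) • u = u) (hv : ∀ x : H, (x : G) • v = v) :
    relTransfer G R ⊤ H (relTransfer G R H K u * v) = relTransfer G R ⊤ K (u * v) := by
  haveI : Fintype (H ⧸ K.subgroupOf H) := Fintype.ofFinite _
  haveI : Fintype ((⊤ : Subgroup G) ⧸ H.subgroupOf ⊤) := Fintype.ofFinite _
  haveI : Fintype ((⊤ : Subgroup G) ⧸ K.subgroupOf ⊤) := Fintype.ofFinite _
  have huv : ∀ x : K, (x : G) • (u * v) = u * v := fun x => by
    rw [smul_mul', hu x, hv ⟨(x : G), hKH x.2⟩]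
  have main : ∀ p : ((⊤ : Subgroup G) ⧸ H.subgroupOf ⊤) × (H ⧸ K.subgroupOf H),
      ((p.1.out : (⊤ : Subgroup G)) : G) • (((p.2.out : H) : G) • u * v) =
      (((theta K H p).out : (⊤ : Subgroup G)) : G) • (u * v) := by
    intro p
    have h1 : theta K H p =
        QuotientGroup.mk (p.1.out * ⟨((p.2.out : H) : G), Subgroup.mem_top _⟩) := rfl
    rw [h1, smul_out_eq huv]
    have h2 : (((p.1.out * ⟨((p.2.out : H) : G), Subgroup.mem_top _⟩ : (⊤ : Subgroup G))) : G)
        = ((p.1.out : (⊤ : Subgroup G)) : G) * ((p.2.out : H) : G) := rfl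
    rw [h2, mul_smul]
    congr 1
    rw [smul_mul', hv p.2.out]
  calc relTransfer G R ⊤ H (relTransfer G R H K u * v)
      = ∑ c : (⊤ : Subgroup G) ⧸ H.subgroupOf ⊤,
          ∑ d : H ⧸ K.subgroupOf H, (c.out : G) • (((d.out : H) : G) • u * v) := by
        rw [relTransfer_def, relTransfer_def]
        refine Finset.sum_congr rfl fun c _ => ?_
        rw [Finset.sum_mul, Finset.smul_sum]
    _ = ∑ p : ((⊤ : Subgroup G) ⧸ H.subgroupOf ⊤) × (H ⧸ K.subgroupOf H),
          ((p.1.out : (⊤ : Subgroup G)) : G) • (((p.2.out : H) : G) • u * v) :=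
        (Fintype.sum_prod_type (f := fun p : ((⊤ : Subgroup G) ⧸ H.subgroupOf ⊤) × (H ⧸ K.subgroupOf H) =>
          ((p.1.out : (⊤ : Subgroup G)) : G) • (((p.2.out : H) : G) • u * v))).symm
    _ = ∑ p : ((⊤ : Subgroup G) ⧸ H.subgroupOf ⊤) × (H ⧸ K.subgroupOf H),
          (((theta K H p).out : (⊤ : Subgroup G)) : G) • (u * v) :=
        Finset.sum_congr rfl fun p _ => main p
    _ = ∑ e : (⊤ : Subgroup G) ⧸ K.subgroupOf ⊤, ((e.out : (⊤ : Subgroup G)) : G) • (u * v) :=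
        Fintype.sum_bijective (theta K H) (theta_bijective hKH) _ _ (fun p => rfl)
    _ = relTransfer G R ⊤ K (u * v) := (relTransfer_def _ _ _).symm

theorem key_mem {K H : Subgroup G} (hKH : K ≤ H) (x : invSub G R H)
    (hx : x ∈ transferIdeal G R H K) :
    ∀ v : R, (∀ h : H, (h : G) • v = v) → ∀ z : invSub G R ⊤,
      (z : R) = relTransfer G R ⊤ H ((x : R) * v) → z ∈ transferIdeal G R ⊤ K := by
  refine Submodule.span_induction ?_ ?_ ?_ ?_ hx
  · rintro y ⟨u, hu, hy⟩ v hv z hz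
    refine Ideal.subset_span
      ⟨u * v, fun xk => by rw [smul_mul', hu xk, hv ⟨(xk : G), hKH xk.2⟩], ?_⟩
    rw [hz, hy, relTransfer_trans hKH hu hv]
  · intro v hv z hz
    have hz0 : (z : R) = 0 := by
      rw [hz, ZeroMemClass.coe_zero, zero_mul, relTransfer_zero]
    have hzz : z = 0 := Subtype.ext (by rw [hz0]; rfl)
    rw [hzz]
    exact Ideal.zero_mem _
  · intro p q hpmem hqmem ihp ihq v hv z hz
    have hpH : ∀ h : H, (h : G) • ((p : R) * v) = (p : R) * v := fun h => by
      rw [smul_mul', p.2 h, hv h]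
    have hqH : ∀ h : H, (h : G) • ((q : R) * v) = (q : R) * v := fun h => by
      rw [smul_mul', q.2 h, hv h]
    set zp : invSub G R ⊤ := ⟨relTransfer G R ⊤ H ((p : R) * v),
      fun h' => relTransfer_smul hpH h'⟩ with hzp
    set zq : invSub G R ⊤ := ⟨relTransfer G R ⊤ H ((q : R) * v),
      fun h' => relTransfer_smul hqH h'⟩ with hzq
    have hzsum : z = zp + zq := Subtype.ext (by
      rw [hz]
      push_cast
      rw [add_mul, relTransfer_add])
    rw [hzsum]
    exact Ideal.add_mem _ (ihp v hv zp rfl) (ihq v hv zq rfl)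
  · intro a p hpmem ihp v hv z hz
    have hav : ∀ h : H, (h : G) • ((a : R) * v) = (a : R) * v := fun h => by
      rw [smul_mul', a.2 h, hv h]
    refine ihp ((a : R) * v) hav z (hz.trans ?_)
    congr 1
    have hco : ((a • p : invSub G R H) : R) = (a : R) * (p : R) := rfl
    rw [hco]
    ring

end Helpers


set_option maxHeartbeats 4000000 in
/-- if `K ≤ H` for all `H ∈ 𝒳` and `f ∈ k[V]^G` lies in `I^H_K` for
every `H ∈ 𝒳` but not in `I^G_K`, then `I^G_𝒳` annihilates the nonzero element
`f + I^G_K` of `k[V]^G / I^G_K`, and `I^G_𝒳` is contained in some associated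
prime of `k[V]^G / I^G_K`. -/
theorem transferIdealFamily_le_associatedPrime
    (k : Type) [Field k] (n : ℕ)
    (G : Type) [Group G] [Fintype G]
    [MulSemiringAction G (MvPolynomial (Fin n) k)]
    [SMulCommClass G k (MvPolynomial (Fin n) k)]
    (hlin : ∀ (σ : G) (i : Fin n), (σ • (X i : MvPolynomial (Fin n) k)).IsHomogeneous 1)
    (𝓧 : Set (Subgroup G)) (K : Subgroup G) (hK : ∀ H ∈ 𝓧, K ≤ H)
    (f : MvPolynomial (Fin n) k) (hfG : ∀ g : G, g • f = f)
    (hfin : ∀ H ∈ 𝓧, (⟨f, fun x => hfG x⟩ : invSub G (MvPolynomial (Fin n) k) H) ∈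
      transferIdeal G (MvPolynomial (Fin n) k) H K)
    (hfout : (⟨f, fun x => hfG x⟩ : invSub G (MvPolynomial (Fin n) k) ⊤) ∉
      transferIdeal G (MvPolynomial (Fin n) k) ⊤ K) :
    (Ideal.Quotient.mk (transferIdeal G (MvPolynomial (Fin n) k) ⊤ K)
        (⟨f, fun x => hfG x⟩ : invSub G (MvPolynomial (Fin n) k) ⊤) ≠ 0) ∧
    (∀ a ∈ transferIdealFamily G (MvPolynomial (Fin n) k) 𝓧,
      a * (⟨f, fun x => hfG x⟩ : invSub G (MvPolynomial (Fin n) k) ⊤) ∈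
        transferIdeal G (MvPolynomial (Fin n) k) ⊤ K) ∧
    ∃ P : Ideal (invSub G (MvPolynomial (Fin n) k) ⊤),
      IsAssociatedPrime P ((invSub G (MvPolynomial (Fin n) k) ⊤) ⧸
        transferIdeal G (MvPolynomial (Fin n) k) ⊤ K) ∧
      transferIdealFamily G (MvPolynomial (Fin n) k) 𝓧 ≤ P := by
  classical
  set B := invSub G (MvPolynomial (Fin n) k) ⊤ with hB
  set J := transferIdeal G (MvPolynomial (Fin n) k) ⊤ K with hJ
  set F : B := ⟨f, fun x => hfG x⟩ with hF
  have part1 : Ideal.Quotient.mk J F ≠ 0 := fun h0 =>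
    hfout (Ideal.Quotient.eq_zero_iff_mem.mp h0)
  have part2 : ∀ a ∈ transferIdealFamily G (MvPolynomial (Fin n) k) 𝓧, a * F ∈ J := by
    intro a ha
    refine Submodule.span_induction ?_ ?_ ?_ ?_ ha
    · rintro y ⟨H, hH, g, hg, hy⟩
      refine key_mem (hK H hH) ⟨f, fun x => hfG x⟩ (hfin H hH) g hg (y * F) ?_
      show (y : MvPolynomial (Fin n) k) * f = _
      rw [hy, relTransfer_mul_right (fun h : (⊤ : Subgroup G) => hfG h) g, mul_comm g f]
    · rw [zero_mul]; exact J.zero_mem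
    · intro p q _ _ hp hq
      rw [add_mul]
      exact J.add_mem hp hq
    · intro c p _ hp
      rw [smul_eq_mul, mul_assoc]
      exact J.mul_mem_left c hp
  -- Noetherianity of the invariant ring, via Artin--Tate
  have hCfix : ∀ (a : k) (g : G), g • (algebraMap k (MvPolynomial (Fin n) k) a)
      = algebraMap k (MvPolynomial (Fin n) k) a := fun a g => by
    rw [Algebra.algebraMap_eq_smul_one, smul_comm, smul_one]
  letI : Algebra k B := RingHom.toAlgebra
    ((algebraMap k (MvPolynomial (Fin n) k)).codRestrict B
      (fun a h => hCfix a h))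
  haveI : IsScalarTower k B (MvPolynomial (Fin n) k) :=
    IsScalarTower.of_algebraMap_eq (fun x => rfl)
  haveI : Algebra.FiniteType B (MvPolynomial (Fin n) k) :=
    Algebra.FiniteType.of_restrictScalars_finiteType k (↥B) (MvPolynomial (Fin n) k)
  haveI : Algebra.IsIntegral B (MvPolynomial (Fin n) k) := by
    constructor
    intro x
    have hco : ((prodXSubSMul G (MvPolynomial (Fin n) k) x).coeffs : Set _) ⊆ (B : Set (MvPolynomial (Fin n) k)) := by
      intro c hc
      obtain ⟨m, _, rfl⟩ := Polynomial.mem_coeffs_iff.mp hc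
      exact fun h => prodXSubSMul.coeff G _ x (h : G) m
    refine ⟨(prodXSubSMul G _ x).toSubring B hco, ?_, ?_⟩
    · have hm := prodXSubSMul.monic G (MvPolynomial (Fin n) k) x
      rw [← Polynomial.map_toSubring _ B hco] at hm
      exact (Function.Injective.monic_map_iff Subtype.coe_injective).mpr hm
    · rw [Polynomial.eval₂_eq_eval_map]
      have hmap : (Polynomial.map (algebraMap B (MvPolynomial (Fin n) k))
          ((prodXSubSMul G _ x).toSubring B hco)) = prodXSubSMul G _ x :=
        Polynomial.map_toSubring _ B hco
      rw [hmap]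
      exact prodXSubSMul.eval G _ x
  haveI : Module.Finite B (MvPolynomial (Fin n) k) := Algebra.IsIntegral.finite
  have hfgB : (⊤ : Subalgebra k B).FG :=
    fg_of_fg_of_fg k B (MvPolynomial (Fin n) k)
      (inferInstance : Algebra.FiniteType k (MvPolynomial (Fin n) k)).1
      (inferInstance : Module.Finite B (MvPolynomial (Fin n) k)).1
      Subtype.coe_injective
  haveI : Algebra.FiniteType k B := ⟨hfgB⟩
  haveI : IsNoetherianRing B := Algebra.FiniteType.isNoetherianRing k B
  obtain ⟨P, hP, hPle⟩ := exists_le_isAssociatedPrime_of_isNoetherianRing B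
    (Ideal.Quotient.mk J F) part1
  refine ⟨part1, part2, P, hP, le_trans ?_ hPle⟩
  intro a ha
  rw [Submodule.mem_colon_singleton, Submodule.mem_bot]
  have hsm : a • (Ideal.Quotient.mk J F) = Ideal.Quotient.mk J (a * F) := rfl
  rw [hsm, Ideal.Quotient.eq_zero_iff_mem]
  exact part2 a ha
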